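/- Let 𝔄 = (ℕ, succ) be the structure with universe ℕ and binary relation succ = {(n, n+1) | n ∈ ℕ}. For m ∈ ℕ, let I_m be the structure with universe U_m = {w ∈ List ℕ | [m] is a prefix of w}, equipped with: the prefix relation restricted to U_m, the relation {(w ++ [a], w ++ [b]) | w ∈ U_m, b = a + 1}, the constant [m], and the clone predicate {w ++ [a, a] | w ++ [a, a] ∈ U_m}. Then for all m, n ∈ ℕ, the structures I_m and I_n are isomorphic (as relational structures) if and only if m = n. (This shows that the rooted subtrees of the finitary Muchnik iteration of (ℕ, succ) are pairwise non-isomorphic.) -/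

import Mathlib

open FirstOrder

namespace Paper

/-- The relation symbols of the Muchnik iteration of `(ℕ, succ)`: the prefix order, the
lifted successor relation, and the clone predicate. -/
inductive NatIterRel : ℕ → Type
  | pre : NatIterRel 2
  | succ : NatIterRel 2
  | clone : NatIterRel 1

/-- The language of the Muchnik iteration of `(ℕ, succ)`: the relations above and a constant
(for the root). -/
def natIterLang : Language where
  Functions n := match n with
    | 0 => Unit
    | _ + 1 => Empty
  Relations := NatIterRel

/-- The universe `U_m`: all words over `ℕ` having `[m]` as a prefix. -/
def Um (m : ℕ) : Type := {w : List ℕ // [m] <+: w}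

/-- The structure `I_m`: the subtree of the finitary Muchnik iteration of `(ℕ, succ)` rooted
at `[m]`, with the prefix relation, the lifted successor relation, the constant `[m]`, and
the clone predicate. -/
instance ImStructure (m : ℕ) : natIterLang.Structure (Um m) where
  funMap {n} f := match n, f with
    | 0, _ => fun _ => (⟨[m], List.prefix_refl _⟩ : Um m)
    | _ + 1, f => f.elim
  RelMap {n} r := match n, r with
    | 2, NatIterRel.pre => fun x => (x 0).val <+: (x 1).val
    | 2, NatIterRel.succ => fun x => ∃ (w : List ℕ) (a : ℕ),
        [m] <+: w ∧ (x 0).val = w ++ [a] ∧ (x 1).val = w ++ [a + 1]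
    | 1, NatIterRel.clone => fun x => ∃ (w : List ℕ) (a : ℕ), (x 0).val = w ++ [a, a]

/-- The root of `U_k`. -/
def rt (k : ℕ) : Um k := ⟨[k], List.prefix_refl _⟩

/-- The depth-one element `[k, a]` of `U_k`. -/
def elt (k a : ℕ) : Um k := ⟨[k, a], ⟨[a], rfl⟩⟩

lemma Um.ext {k : ℕ} {x y : Um k} (h : x.val = y.val) : x = y := Subtype.ext h

/-- "Child of the root", expressed using only equality and the structure's universe. -/
def IsChild {k : ℕ} (x : Um k) : Prop :=
  x ≠ rt k ∧ ∀ y : Um k, y.val <+: x.val → y = rt k ∨ y = x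

lemma isChild_iff {k : ℕ} (x : Um k) : IsChild x ↔ ∃ b, x.val = [k, b] := by
  constructor
  · rintro ⟨hne, hmin⟩
    obtain ⟨t, ht⟩ := x.2
    cases t with
    | nil => exact absurd (Um.ext ht.symm) hne
    | cons c t' =>
      have hy : ([k, c] : List ℕ) <+: x.val := by
        rw [← ht]; exact ⟨t', by simp⟩
      rcases hmin ⟨[k, c], ⟨[c], rfl⟩⟩ hy with h | h
      · exact absurd (congrArg Subtype.val h) (by simp [rt])
      · exact ⟨c, by rw [← congrArg Subtype.val h]⟩
  · rintro ⟨b, hb⟩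
    refine ⟨fun h => by simp [rt, h] at hb, fun y hy => ?_⟩
    obtain ⟨u, hu⟩ := y.2
    rw [← hu, hb] at hy
    simp only [List.singleton_append, List.cons_prefix_cons] at hy
    obtain ⟨-, hu2⟩ := hy
    cases u with
    | nil => exact Or.inl (Um.ext (by rw [← hu]; rfl))
    | cons c u' =>
      rw [List.cons_prefix_cons] at hu2
      obtain ⟨rfl, hu3⟩ := hu2
      have : u' = [] := List.prefix_nil.mp hu3
      subst this
      exact Or.inr (Um.ext (by rw [← hu, hb]; rfl))

section
variable {m n : ℕ} (g : Um m ≃[natIterLang] Um n)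

lemma g_pre (x y : Um m) : (g x).val <+: (g y).val ↔ x.val <+: y.val :=
  g.map_rel NatIterRel.pre ![x, y]

lemma g_succ (x y : Um m) :
    (∃ (w : List ℕ) (a : ℕ), [n] <+: w ∧ (g x).val = w ++ [a] ∧ (g y).val = w ++ [a + 1])
    ↔ ∃ (w : List ℕ) (a : ℕ), [m] <+: w ∧ x.val = w ++ [a] ∧ y.val = w ++ [a + 1] :=
  g.map_rel NatIterRel.succ ![x, y]

lemma g_clone (x : Um m) :
    (∃ (w : List ℕ) (a : ℕ), (g x).val = w ++ [a, a])
    ↔ ∃ (w : List ℕ) (a : ℕ), x.val = w ++ [a, a] :=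
  g.map_rel NatIterRel.clone ![x]

lemma g_rt : g (rt m) = rt n := g.map_fun (n := 0) (Unit.unit : natIterLang.Functions 0) ![]

lemma g_child {x : Um m} (h : IsChild x) : IsChild (g x) := by
  obtain ⟨hne, hmin⟩ := h
  constructor
  · intro hc
    exact hne (g.injective (by rw [hc, g_rt]))
  · intro y hy
    have hy' : (g (g.symm y)).val <+: (g x).val := by
      rwa [g.apply_symm_apply]
    rcases hmin (g.symm y) ((g_pre g _ _).mp hy') with h | h
    · left; rw [← g.apply_symm_apply y, h, g_rt]
    · right; rw [← g.apply_symm_apply y, h]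

lemma g_elt (a : ℕ) : g (elt m a) = elt n a := by
  induction a with
  | zero =>
    -- `g (elt m 0)` is a child of the root
    obtain ⟨b, hb⟩ := (isChild_iff _).mp (g_child g ((isChild_iff (elt m 0)).mpr ⟨0, rfl⟩))
    -- it has no succ-predecessor, hence `b = 0`
    cases b with
    | zero => exact Um.ext (by rw [hb]; rfl)
    | succ c =>
      exfalso
      have hsucc : ∃ (w : List ℕ) (a : ℕ), [n] <+: w ∧
          (g (g.symm (elt n c))).val = w ++ [a] ∧ (g (elt m 0)).val = w ++ [a + 1] := by
        refine ⟨[n], c, List.prefix_refl _, ?_, ?_⟩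
        · rw [g.apply_symm_apply]; rfl
        · rw [hb]; rfl
      obtain ⟨w, a, -, -, h2⟩ := (g_succ g _ _).mp hsucc
      have h2' : ([m] ++ [0] : List ℕ) = w ++ [a + 1] := h2
      have := (List.append_inj' h2' rfl).2
      simp at this
  | succ a ih =>
    have hsucc : ∃ (w : List ℕ) (c : ℕ), [m] <+: w ∧
        (elt m a : Um m).val = w ++ [c] ∧ (elt m (a + 1) : Um m).val = w ++ [c + 1] :=
      ⟨[m], a, List.prefix_refl _, rfl, rfl⟩
    obtain ⟨w, c, -, h1, h2⟩ := (g_succ g _ _).mpr hsucc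
    rw [ih] at h1
    have h1' : ([n] ++ [a] : List ℕ) = w ++ [c] := h1
    obtain ⟨rfl, hc⟩ := List.append_inj' h1' rfl
    simp at hc
    subst hc
    exact Um.ext h2

end

theorem Im_iso_iff (m n : ℕ) : Nonempty (Um m ≃[natIterLang] Um n) ↔ m = n := by
  constructor
  · rintro ⟨g⟩
    have hclone : ∃ (w : List ℕ) (a : ℕ), (g (elt m m)).val = w ++ [a, a] :=
      (g_clone g _).mpr ⟨[], m, rfl⟩
    obtain ⟨w, a, hw⟩ := hclone
    rw [g_elt g] at hw
    have hw' : ([n, m] : List ℕ) = w ++ [a, a] := hw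
    have hlen : w = [] := by
      have := congrArg List.length hw'
      simp only [List.length_cons, List.length_nil, List.length_append] at this
      exact List.eq_nil_of_length_eq_zero (by omega)
    subst hlen
    simp at hw'
    omega
  · rintro rfl
    exact ⟨Language.Equiv.refl _ _⟩

end Paper
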